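/- For any probability measure D on X×Y and any probability measure Q on H, the Gibbs risk decomposes as r_D(Q) = e_D(Q) + (1/2)·d_D(Q), i.e., the Gibbs risk equals the expected joint error plus half the expected disagreement. -/

import Mathlib

open MeasureTheory

variable {X H : Type*} [MeasurableSpace X] [MeasurableSpace H]

/-- Gibbs risk: `r_D(Q) = E_{h~Q} P_{(x,y)~D}[h(x) ≠ y]`. -/
noncomputable def gibbsRisk (D : Measure (X × ℝ)) (Q : Measure H) (f : H → X → ℝ) : ℝ :=
  ∫ h, (D {p | f h p.1 ≠ p.2}).toReal ∂Q

/-- Expected disagreement: `d_D(Q) = E_{h1~Q} E_{h2~Q} P_{x~D_X}[h1(x) ≠ h2(x)]`. -/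
noncomputable def disagreement (D : Measure (X × ℝ)) (Q : Measure H) (f : H → X → ℝ) : ℝ :=
  ∫ h₁, ∫ h₂, ((D.map Prod.fst) {x | f h₁ x ≠ f h₂ x}).toReal ∂Q ∂Q

/-- Expected joint error: `e_D(Q) = E_{h1~Q} E_{h2~Q} P_{(x,y)~D}[h1(x) ≠ y ∧ h2(x) ≠ y]`. -/
noncomputable def jointError (D : Measure (X × ℝ)) (Q : Measure H) (f : H → X → ℝ) : ℝ :=
  ∫ h₁, ∫ h₂, (D {p | f h₁ p.1 ≠ p.2 ∧ f h₂ p.1 ≠ p.2}).toReal ∂Q ∂Q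

section Aux

variable (D : Measure (X × ℝ)) [IsProbabilityMeasure D] (f : H → X → ℝ)

lemma aux_meas_fh (hf : Measurable fun p : H × X => f p.1 p.2) (h : H) :
    Measurable (f h) :=
  hf.comp (measurable_const.prodMk measurable_id)

lemma aux_ne_set (hf : Measurable fun p : H × X => f p.1 p.2) (h : H) :
    MeasurableSet {p : X × ℝ | f h p.1 ≠ p.2} := by
  rw [show {p : X × ℝ | f h p.1 ≠ p.2} = {p : X × ℝ | f h p.1 = p.2}ᶜ from rfl]
  exact (measurableSet_eq_fun ((aux_meas_fh f hf h).comp measurable_fst)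
    measurable_snd).compl

lemma aux_key (hf : Measurable fun p : H × X => f p.1 p.2)
    (hvals : ∀ h x, f h x = 1 ∨ f h x = -1)
    (hlabels : ∀ᵐ p ∂D, p.2 = 1 ∨ p.2 = -1) (h₁ h₂ : H) :
    (D {p : X × ℝ | f h₁ p.1 ≠ p.2}).toReal + (D {p : X × ℝ | f h₂ p.1 ≠ p.2}).toReal =
      2 * (D {p : X × ℝ | f h₁ p.1 ≠ p.2 ∧ f h₂ p.1 ≠ p.2}).toReal +
        (D {p : X × ℝ | f h₁ p.1 ≠ f h₂ p.1}).toReal := by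
  set A : Set (X × ℝ) := {p | f h₁ p.1 ≠ p.2} with hAdef
  set B : Set (X × ℝ) := {p | f h₂ p.1 ≠ p.2} with hBdef
  set C : Set (X × ℝ) := {p | f h₁ p.1 ≠ f h₂ p.1} with hCdef
  set S : Set (X × ℝ) := {p | p.2 = 1 ∨ p.2 = -1} with hSdef
  have hB : MeasurableSet B := aux_ne_set f hf h₂
  have hC : MeasurableSet C := by
    rw [show C = {p : X × ℝ | f h₁ p.1 = f h₂ p.1}ᶜ from rfl]
    exact (measurableSet_eq_fun ((aux_meas_fh f hf h₁).comp measurable_fst)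
      ((aux_meas_fh f hf h₂).comp measurable_fst)).compl
  have hS : MeasurableSet S := by
    rw [show S = {p : X × ℝ | p.2 = 1} ∪ {p : X × ℝ | p.2 = -1} from rfl]
    exact (measurable_snd (measurableSet_singleton 1)).union
      (measurable_snd (measurableSet_singleton (-1)))
  have hSc : D Sᶜ = 0 := by
    have := (ae_iff).mp hlabels
    simpa [hSdef, Set.compl_setOf] using this
  have hset : (A ∪ B) ∩ S = ((A ∩ B) ∩ S) ∪ (C ∩ S) := by
    ext ⟨x, y⟩
    simp only [hAdef, hBdef, hCdef, hSdef, Set.mem_inter_iff, Set.mem_union,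
      Set.mem_setOf_eq]
    rcases hvals h₁ x with h1 | h1 <;> rcases hvals h₂ x with h2 | h2 <;>
      by_cases hy1 : y = 1 <;> by_cases hy2 : y = -1 <;> simp_all <;> norm_num
  have hdisj : Disjoint ((A ∩ B) ∩ S) (C ∩ S) := by
    rw [Set.disjoint_left]
    rintro ⟨x, y⟩ ⟨⟨ha, hb⟩, hy⟩ ⟨hc, -⟩
    simp only [hAdef, hBdef, hCdef, hSdef, Set.mem_setOf_eq] at ha hb hc hy
    rcases hvals h₁ x with h1 | h1 <;> rcases hvals h₂ x with h2 | h2 <;>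
      rcases hy with rfl | rfl <;> simp_all
  have hEnn : D A + D B = (D (A ∩ B) + D (A ∩ B)) + D C := by
    have e1 : D (A ∪ B) + D (A ∩ B) = D A + D B := measure_union_add_inter A hB
    have e2 : D (A ∪ B) = D (A ∩ B) + D C := by
      calc D (A ∪ B) = D ((A ∪ B) ∩ S) := (measure_inter_conull hSc).symm
        _ = D (((A ∩ B) ∩ S) ∪ (C ∩ S)) := by rw [hset]
        _ = D ((A ∩ B) ∩ S) + D (C ∩ S) := measure_union hdisj (hC.inter hS)
        _ = D (A ∩ B) + D C := by rw [measure_inter_conull hSc, measure_inter_conull hSc]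
    rw [← e1, e2]; ring
  have hfin : ∀ s : Set (X × ℝ), D s ≠ ⊤ := fun s => measure_ne_top D s
  have := congrArg ENNReal.toReal hEnn
  rw [ENNReal.toReal_add (hfin A) (hfin B),
    ENNReal.toReal_add (ENNReal.add_ne_top.mpr ⟨hfin _, hfin _⟩) (hfin C),
    ENNReal.toReal_add (hfin _) (hfin _)] at this
  have hABmem : (A ∩ B) = {p : X × ℝ | f h₁ p.1 ≠ p.2 ∧ f h₂ p.1 ≠ p.2} := rfl
  rw [hABmem] at this
  linarith

end Aux

theorem gibbs_risk_eq_jointError_add_half_disagreement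
    (D : Measure (X × ℝ)) [IsProbabilityMeasure D]
    (Q : Measure H) [IsProbabilityMeasure Q]
    (f : H → X → ℝ)
    (hf : Measurable fun p : H × X => f p.1 p.2)
    (hvals : ∀ h x, f h x = 1 ∨ f h x = -1)
    (hlabels : ∀ᵐ p ∂D, p.2 = 1 ∨ p.2 = -1) :
    gibbsRisk D Q f = jointError D Q f + (1 / 2) * disagreement D Q f := by
  -- basic bound
  have hbnd : ∀ s : Set (X × ℝ), ‖(D s).toReal‖ ≤ 1 := by
    intro s
    rw [Real.norm_eq_abs, abs_of_nonneg ENNReal.toReal_nonneg]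
    simpa using ENNReal.toReal_mono ENNReal.one_ne_top prob_le_one
  have integ : ∀ {g : H → ℝ}, Measurable g → (∀ h, ‖g h‖ ≤ 1) → Integrable g Q :=
    fun hg hb => ⟨hg.aestronglyMeasurable,
      HasFiniteIntegral.of_bounded (C := 1) (Filter.Eventually.of_forall hb)⟩
  -- the three integrand families
  set r : H → ℝ := fun h => (D {p : X × ℝ | f h p.1 ≠ p.2}).toReal with hrdef
  set gE : H × H → ℝ :=
    fun q => (D {p : X × ℝ | f q.1 p.1 ≠ p.2 ∧ f q.2 p.1 ≠ p.2}).toReal with hgEdef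
  set gD : H × H → ℝ := fun q => (D {p : X × ℝ | f q.1 p.1 ≠ f q.2 p.1}).toReal with hgDdef
  -- measurability of r
  have hr_meas : Measurable r := by
    have hms : MeasurableSet {q : H × (X × ℝ) | f q.1 q.2.1 ≠ q.2.2} := by
      rw [show {q : H × (X × ℝ) | f q.1 q.2.1 ≠ q.2.2}
          = {q : H × (X × ℝ) | f q.1 q.2.1 = q.2.2}ᶜ from rfl]
      exact (measurableSet_eq_fun
        (hf.comp (measurable_fst.prodMk (measurable_fst.comp measurable_snd)))
        (measurable_snd.comp measurable_snd)).compl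
    exact (measurable_measure_prodMk_left (ν := D) hms).ennreal_toReal
  have hr_int : Integrable r Q := integ hr_meas fun h => hbnd _
  -- measurability of gE and gD
  have hgE_meas : Measurable gE := by
    have hms : MeasurableSet
        {q : (H × H) × (X × ℝ) | f q.1.1 q.2.1 ≠ q.2.2 ∧ f q.1.2 q.2.1 ≠ q.2.2} := by
      rw [show {q : (H × H) × (X × ℝ) | f q.1.1 q.2.1 ≠ q.2.2 ∧ f q.1.2 q.2.1 ≠ q.2.2}
          = {q : (H × H) × (X × ℝ) | f q.1.1 q.2.1 = q.2.2}ᶜ ∩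
            {q : (H × H) × (X × ℝ) | f q.1.2 q.2.1 = q.2.2}ᶜ from rfl]
      exact ((measurableSet_eq_fun
          (hf.comp ((measurable_fst.comp measurable_fst).prodMk
            (measurable_fst.comp measurable_snd)))
          (measurable_snd.comp measurable_snd)).compl).inter
        ((measurableSet_eq_fun
          (hf.comp ((measurable_snd.comp measurable_fst).prodMk
            (measurable_fst.comp measurable_snd)))
          (measurable_snd.comp measurable_snd)).compl)
    exact (measurable_measure_prodMk_left (ν := D) hms).ennreal_toReal
  have hgD_meas : Measurable gD := by
    have hms : MeasurableSet
        {q : (H × H) × (X × ℝ) | f q.1.1 q.2.1 ≠ f q.1.2 q.2.1} := by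
      rw [show {q : (H × H) × (X × ℝ) | f q.1.1 q.2.1 ≠ f q.1.2 q.2.1}
          = {q : (H × H) × (X × ℝ) | f q.1.1 q.2.1 = f q.1.2 q.2.1}ᶜ from rfl]
      exact (measurableSet_eq_fun
        (hf.comp ((measurable_fst.comp measurable_fst).prodMk
          (measurable_fst.comp measurable_snd)))
        (hf.comp ((measurable_snd.comp measurable_fst).prodMk
          (measurable_fst.comp measurable_snd)))).compl
    exact (measurable_measure_prodMk_left (ν := D) hms).ennreal_toReal
  -- inner integrals
  set FE : H → ℝ := fun h₁ => ∫ h₂, gE (h₁, h₂) ∂Q with hFEdef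
  set FD : H → ℝ := fun h₁ => ∫ h₂, gD (h₁, h₂) ∂Q with hFDdef
  have hFE_int : Integrable FE Q := by
    refine integ ?_ ?_
    · exact (hgE_meas.stronglyMeasurable.integral_prod_right').measurable
    · intro h₁
      show ‖∫ h₂, gE (h₁, h₂) ∂Q‖ ≤ 1
      simpa using norm_integral_le_of_norm_le_const (C := 1) (μ := Q)
        (Filter.Eventually.of_forall fun h₂ => hbnd _)
  have hFD_int : Integrable FD Q := by
    refine integ ?_ ?_
    · exact (hgD_meas.stronglyMeasurable.integral_prod_right').measurable
    · intro h₁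
      show ‖∫ h₂, gD (h₁, h₂) ∂Q‖ ≤ 1
      simpa using norm_integral_le_of_norm_le_const (C := 1) (μ := Q)
        (Filter.Eventually.of_forall fun h₂ => hbnd _)
  have hgE1_int : ∀ h₁, Integrable (fun h₂ => gE (h₁, h₂)) Q := fun h₁ =>
    integ (hgE_meas.comp (measurable_const.prodMk measurable_id)) fun h₂ => hbnd _
  have hgD1_int : ∀ h₁, Integrable (fun h₂ => gD (h₁, h₂)) Q := fun h₁ =>
    integ (hgD_meas.comp (measurable_const.prodMk measurable_id)) fun h₂ => hbnd _
  -- rewrite the pushforward in disagreement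
  have hmap : ∀ h₁ h₂ : H,
      ((D.map Prod.fst) {x | f h₁ x ≠ f h₂ x}).toReal = gD (h₁, h₂) := by
    intro h₁ h₂
    have hms : MeasurableSet {x : X | f h₁ x ≠ f h₂ x} := by
      rw [show {x : X | f h₁ x ≠ f h₂ x} = {x : X | f h₁ x = f h₂ x}ᶜ from rfl]
      exact (measurableSet_eq_fun (aux_meas_fh f hf h₁) (aux_meas_fh f hf h₂)).compl
    rw [Measure.map_apply measurable_fst hms]
    rfl
  have hG : gibbsRisk D Q f = ∫ h, r h ∂Q := rfl
  have hjE : jointError D Q f = ∫ h₁, FE h₁ ∂Q := rfl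
  have hdis : disagreement D Q f = ∫ h₁, FD h₁ ∂Q := by
    unfold disagreement
    simp only [hmap]
    rfl
  -- pointwise decomposition of the inner integrals
  have step1 : ∀ h₁, FE h₁ + (1 / 2) * FD h₁ = (1 / 2) * (r h₁ + gibbsRisk D Q f) := by
    intro h₁
    have hkey : ∀ h₂, gE (h₁, h₂) + (1 / 2) * gD (h₁, h₂) = (1 / 2) * (r h₁ + r h₂) := by
      intro h₂
      have := aux_key D f hf hvals hlabels h₁ h₂
      simp only [hrdef, hgEdef, hgDdef]
      linarith
    calc FE h₁ + (1 / 2) * FD h₁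
        = ∫ h₂, (gE (h₁, h₂) + (1 / 2) * gD (h₁, h₂)) ∂Q := by
          rw [integral_add (hgE1_int h₁) ((hgD1_int h₁).const_mul _), integral_const_mul]
      _ = ∫ h₂, (1 / 2) * (r h₁ + r h₂) ∂Q := by simp only [hkey]
      _ = (1 / 2) * (r h₁ + gibbsRisk D Q f) := by
          rw [integral_const_mul, integral_add (integrable_const _) hr_int, integral_const]
          simp [hG]
  -- put everything together
  have main : jointError D Q f + (1 / 2) * disagreement D Q f = gibbsRisk D Q f := by
    calc jointError D Q f + (1 / 2) * disagreement D Q f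
        = ∫ h₁, (FE h₁ + (1 / 2) * FD h₁) ∂Q := by
          rw [hjE, hdis, integral_add hFE_int (hFD_int.const_mul _), integral_const_mul]
      _ = ∫ h₁, (1 / 2) * (r h₁ + gibbsRisk D Q f) ∂Q := by simp only [step1]
      _ = (1 / 2) * (gibbsRisk D Q f + gibbsRisk D Q f) := by
          rw [integral_const_mul, integral_add hr_int (integrable_const _), integral_const]
          simp [hG]
      _ = gibbsRisk D Q f := by ring
  exact main.symm
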